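/- arXiv:2411.07896 — 3 statements merged into one kernel-verified Lean document; each statement's English description precedes it below -/
import Mathlib

section
/- Let B be a ring that is finite as a Z_p-algebra (finitely generated as a Z_p-module). Then the J(B)-adic topology and the p-adic topology on B are equivalent: p ∈ J(B) and there exists d ≥ 1 with J(B)^d ⊆ pB. -/
open Ideal Submodule

/-- If `x` is in the Jacobson radical of `⊥`, then `y * x + 1` is a unit
(noncommutative version). -/
lemma isUnit_mul_add_one_of_mem_jacobson {R : Type*} [Ring R] {x : R}
    (hx : x ∈ Ideal.jacobson (⊥ : Ideal R)) (y : R) : IsUnit (y * x + 1) := by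
  have key : ∀ y : R, ∃ z : R, z * (y * x) + z = 1 := by
    intro y
    obtain ⟨z, hz⟩ := Ideal.mem_jacobson_iff.mp hx y
    rw [Submodule.mem_bot, sub_eq_zero] at hz
    exact ⟨z, by rw [← mul_assoc]; exact hz⟩
  obtain ⟨z, hz⟩ := key y
  obtain ⟨w, hw⟩ := key (-(z * y))
  have hzform : -(z * y) * x + 1 = z := by
    rw [neg_mul, mul_assoc, ← hz]; abel
  have hwz : w * z = 1 := by
    rw [← hzform, mul_add, mul_one]
    exact hw
  have hz1 : z * (y * x + 1) = 1 := by rw [mul_add, mul_one]; exact hz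
  have hweq : w = y * x + 1 := by
    calc w = w * 1 := (mul_one w).symm
      _ = w * (z * (y * x + 1)) := by rw [hz1]
      _ = (w * z) * (y * x + 1) := by rw [mul_assoc]
      _ = y * x + 1 := by rw [hwz, one_mul]
  exact ⟨⟨y * x + 1, z, by rw [← hweq]; exact hwz, hz1⟩, rfl⟩

/-- The Jacobson radical of `⊥` is a two-sided ideal: it is closed under right
multiplication. -/
lemma mul_mem_right_jacobson_bot {R : Type*} [Ring R] {x : R}
    (hx : x ∈ Ideal.jacobson (⊥ : Ideal R)) (r : R) :
    x * r ∈ Ideal.jacobson (⊥ : Ideal R) := by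
  rw [Ideal.mem_jacobson_iff]
  intro y
  obtain ⟨u, hu⟩ := isUnit_mul_add_one_of_mem_jacobson hx (r * y)
  set v : R := ((u⁻¹ : Rˣ) : R) with hv
  have hv1 : v * (r * y * x + 1) = 1 := by rw [hv, ← hu]; exact u.inv_mul
  refine ⟨1 - y * x * v * r, ?_⟩
  rw [Submodule.mem_bot]
  calc (1 - y * x * v * r) * y * (x * r) + (1 - y * x * v * r) - 1
      = (y * x) * (1 - v * (r * y * x + 1)) * r := by noncomm_ring
    _ = 0 := by rw [hv1]; noncomm_ring

/-- Nakayama's lemma over a possibly noncommutative ring: a finitely generated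
submodule contained in `J(R) • N` (expressed via spans) is trivial. -/
lemma nak {R M : Type*} [Ring R] [AddCommGroup M] [Module R M] (N : Submodule R M) (hN : N.FG)
    (h : N ≤ Submodule.span R
      {y : M | ∃ a ∈ Ideal.jacobson (⊥ : Ideal R), ∃ n ∈ N, y = a • n}) :
    N = ⊥ := by
  classical
  obtain ⟨s, hs⟩ := hN
  suffices H : ∀ s : Finset M,
      Submodule.span R (s : Set M) ≤ Submodule.span R
        {y : M | ∃ a ∈ Ideal.jacobson (⊥ : Ideal R),
          ∃ n ∈ Submodule.span R (s : Set M), y = a • n} →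
      Submodule.span R (s : Set M) = ⊥ by
    rw [← hs]
    exact H s (by rw [hs]; exact h)
  clear hs h s
  intro s
  induction s using Finset.strongInduction with
  | _ s ih =>
    intro hle
    rcases s.eq_empty_or_nonempty with rfl | ⟨m, hm⟩
    · simp
    · set N := Submodule.span R (s : Set M) with hN
      have hmS : m ∈ Submodule.span R
          {y : M | ∃ a ∈ Ideal.jacobson (⊥ : Ideal R), ∃ n ∈ N, y = a • n} :=
        hle (Submodule.subset_span hm)
      obtain ⟨k, c, g, hg⟩ := mem_span_set'.mp hmS
      choose a ha n hn hgn using fun i => (g i).2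
      have hm1 : ∑ i, (c i * a i) • n i = m := by
        rw [← hg]
        exact Finset.sum_congr rfl fun i _ => by rw [hgn i, smul_smul]
      choose d hd using fun i => mem_span_finset.mp (hn i)
      set e : M → R := fun x => ∑ i, c i * a i * d i x with he_def
      have he : ∀ x, e x ∈ Ideal.jacobson (⊥ : Ideal R) := fun x =>
        sum_mem fun i _ => mul_mem_right_jacobson_bot
          (Ideal.mul_mem_left _ (c i) (ha i)) (d i x)
      have hm2 : ∑ x ∈ s, e x • x = m := by
        rw [← hm1]
        calc ∑ x ∈ s, e x • x = ∑ x ∈ s, ∑ i, (c i * a i) • (d i x • x) := by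
              refine Finset.sum_congr rfl fun x _ => ?_
              rw [he_def, Finset.sum_smul]
              exact Finset.sum_congr rfl fun i _ => by rw [smul_smul, mul_assoc]
          _ = ∑ i, ∑ x ∈ s, (c i * a i) • (d i x • x) := Finset.sum_comm
          _ = ∑ i, (c i * a i) • n i := by
              refine Finset.sum_congr rfl fun i _ => ?_
              rw [← Finset.smul_sum, (hd i).2]
      have key0 : e m • m + ∑ x ∈ s.erase m, e x • x = m :=
        (Finset.add_sum_erase s (fun x => e x • x) hm).trans hm2
      have key : (1 - e m) • m = ∑ x ∈ s.erase m, e x • x := by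
        rw [sub_smul, one_smul]
        exact (eq_sub_of_add_eq' key0).symm
      have hmem : m ∈ Submodule.span R ((s.erase m : Finset M) : Set M) := by
        have h1 : (1 - e m) • m ∈ Submodule.span R ((s.erase m : Finset M) : Set M) :=
          key ▸ sum_mem fun x hx => Submodule.smul_mem _ _ (Submodule.subset_span hx)
        obtain ⟨u, hu⟩ := isUnit_mul_add_one_of_mem_jacobson (he m) (-1)
        have hueq : (u : R) = 1 - e m := by rw [hu]; noncomm_ring
        have h2 := Submodule.smul_mem _ ((u⁻¹ : Rˣ) : R) h1
        rwa [← hueq, smul_smul, Units.inv_mul, one_smul] at h2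
      have hspan : Submodule.span R (s : Set M)
          = Submodule.span R ((s.erase m : Finset M) : Set M) := by
        refine le_antisymm (Submodule.span_le.mpr fun x hx => ?_)
          (Submodule.span_mono (by exact_mod_cast Finset.erase_subset m s))
        rcases eq_or_ne x m with rfl | hne
        · exact hmem
        · exact Submodule.subset_span (Finset.mem_erase.mpr ⟨hne, hx⟩)
      rw [hN, hspan]
      apply ih (s.erase m) (Finset.erase_ssubset hm)
      rw [← hspan, ← hN]
      exact hle

/-- Key quotient step: if `B ⧸ pB` is finite, the Jacobson radical is nilpotent
modulo `P`. -/
lemma exists_pow_jacobson_le {B : Type*} [Ring B] (P : Ideal B)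
    (hfin : Finite (B ⧸ (P : Submodule B B))) :
    ∃ d : ℕ, 1 ≤ d ∧ ∀ x : Fin d → B,
      (∀ i, x i ∈ (⊥ : Ideal B).jacobson) → (List.ofFn x).prod ∈ P := by
  set Q := B ⧸ (P : Submodule B B)
  set D : Submodule B Q → Submodule B Q := fun N => Submodule.span B
    {y : Q | ∃ a ∈ Ideal.jacobson (⊥ : Ideal B), ∃ n ∈ N, y = a • n} with hD
  set N : ℕ → Submodule B Q := fun k => D^[k] ⊤ with hNdef
  have hiter : ∀ k, N (k + 1) = D (N k) := fun k => Function.iterate_succ_apply' D k ⊤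
  have hmono : Monotone D := fun N1 N2 h12 => Submodule.span_mono
    (fun y ⟨a, ha, n, hn, hy⟩ => ⟨a, ha, n, h12 hn, hy⟩)
  have hstep : ∀ k, N (k + 1) ≤ N k := by
    intro k
    induction k with
    | zero => exact le_top
    | succ k ihk => rw [hiter (k + 1)]; exact (hmono ihk).trans (hiter k).ge
  have hanti : Antitone N := antitone_nat_of_succ_le hstep
  have hprod : ∀ (k : ℕ) (x : Fin k → B), (∀ i, x i ∈ (⊥ : Ideal B).jacobson) →
      Submodule.Quotient.mk ((List.ofFn x).prod) ∈ N k := by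
    intro k
    induction k with
    | zero => intro x hx; exact Submodule.mem_top
    | succ k ihk =>
      intro x hx
      rw [List.ofFn_succ, List.prod_cons, hiter k]
      have h1 : (Submodule.Quotient.mk (x 0 * (List.ofFn fun i => x i.succ).prod) : Q)
          = x 0 • Submodule.Quotient.mk ((List.ofFn fun i => x i.succ).prod) := by
        rw [← smul_eq_mul, Submodule.Quotient.mk_smul]
      rw [h1]
      exact Submodule.subset_span
        ⟨x 0, hx 0, _, ihk _ (fun i => hx i.succ), rfl⟩
  obtain ⟨n, hn⟩ := IsArtinian.monotone_stabilizes (R := B) (M := Q)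
    ⟨fun k => OrderDual.toDual (N k), fun i j hij => hanti hij⟩
  have h1 : N n = N (n + 1) := congrArg OrderDual.ofDual (hn (n + 1) (Nat.le_succ n))
  have hNn : N n = ⊥ := by
    apply nak (N n) (IsNoetherian.noetherian _)
    exact le_of_eq (h1.trans (hiter n))
  refine ⟨max n 1, le_max_right _ _, ?_⟩
  intro x hx
  have hmem := hprod _ x hx
  have hbot : N (max n 1) = ⊥ := le_bot_iff.mp (hNn ▸ hanti (le_max_left n 1))
  rw [hbot, Submodule.mem_bot] at hmem
  exact (Submodule.Quotient.mk_eq_zero _).mp hmem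

/-- Let `B` be a ring that is finite as a `ℤ_p`-algebra. Then the
`J(B)`-adic and the `p`-adic topologies on `B` agree: `p ∈ J(B)` and there is `d ≥ 1`
with `J(B)^d ⊆ pB`. -/
theorem jacobson_adic_eq_p_adic
    (p : ℕ) [Fact p.Prime] (B : Type*) [Ring B] [Algebra ℤ_[p] B]
    [Module.Finite ℤ_[p] B] :
    (p : B) ∈ (⊥ : Ideal B).jacobson ∧
      ∃ d : ℕ, 1 ≤ d ∧ ∀ x : Fin d → B,
        (∀ i, x i ∈ (⊥ : Ideal B).jacobson) →
          (List.ofFn x).prod ∈ Ideal.span {(p : B)} := by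
  have hpZ : (p : ℤ_[p]) ∈ Ideal.jacobson (⊥ : Ideal ℤ_[p]) := by
    rw [IsLocalRing.jacobson_eq_maximalIdeal ⊥ bot_ne_top, PadicInt.maximalIdeal_eq_span_p]
    exact Ideal.subset_span rfl
  constructor
  · rw [Ideal.jacobson]
    rw [Submodule.mem_sInf]
    rintro m ⟨-, hmax⟩
    by_contra hp
    have hsup : m ⊔ Ideal.span {(p : B)} = ⊤ :=
      hmax.out.2 _ (left_lt_sup.mpr fun hle => hp (hle (Ideal.subset_span rfl)))
    have hNN : (⊤ : Submodule ℤ_[p] B) ≤ m.restrictScalars ℤ_[p]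
        ⊔ (Ideal.span {(p : ℤ_[p])}) • (⊤ : Submodule ℤ_[p] B) := by
      intro b _
      have hbm : b ∈ m ⊔ Ideal.span {(p : B)} := hsup ▸ Submodule.mem_top
      obtain ⟨c, hc, dd, hdd, rfl⟩ := Submodule.mem_sup.mp hbm
      refine Submodule.add_mem _ (Submodule.mem_sup_left hc) (Submodule.mem_sup_right ?_)
      obtain ⟨e, rfl⟩ := Submodule.mem_span_singleton.mp hdd
      have heq : e • (p : B) = (p : ℤ_[p]) • e := by
        rw [smul_eq_mul, Algebra.smul_def, map_natCast]
        exact (Nat.cast_commute p e).symm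
      rw [heq]
      exact Submodule.smul_mem_smul (Ideal.mem_span_singleton_self _) Submodule.mem_top
    have hjac : Ideal.span {(p : ℤ_[p])} ≤ Ideal.jacobson (⊥ : Ideal ℤ_[p]) := by
      rwa [Ideal.span_le, Set.singleton_subset_iff]
    have hle := Submodule.le_of_le_smul_of_le_jacobson_bot
      (Module.Finite.fg_top (R := ℤ_[p]) (M := B)) hjac hNN
    exact hmax.ne_top ((Ideal.eq_top_iff_one m).mpr (hle Submodule.mem_top))
  · set P : Ideal B := Ideal.span {(p : B)} with hP
    haveI : NeZero p := ⟨(Fact.out : p.Prime).ne_zero⟩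
    have torsion : ∀ m : B ⧸ (P : Submodule B B), (p : ℤ_[p]) • m = 0 := by
      intro m
      obtain ⟨b, rfl⟩ := Submodule.Quotient.mk_surjective _ m
      rw [← Submodule.Quotient.mk_smul, Submodule.Quotient.mk_eq_zero]
      have heq : (p : ℤ_[p]) • b = b * (p : B) := by
        rw [Algebra.smul_def, map_natCast]
        exact (Nat.cast_commute p b).eq
      rw [heq]
      exact Ideal.mul_mem_left _ b (Ideal.subset_span rfl)
    haveI hfinmod : Module.Finite ℤ_[p] (B ⧸ (P : Submodule B B)) :=
      Module.Finite.of_surjective ((Submodule.mkQ (P : Submodule B B)).restrictScalars ℤ_[p])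
        (Submodule.Quotient.mk_surjective _)
    obtain ⟨k, s, hs⟩ := Module.Finite.exists_fin (R := ℤ_[p]) (M := B ⧸ (P : Submodule B B))
    have hsurj : Function.Surjective
        (fun c : Fin k → ZMod p => ∑ i, ((c i).val : ℤ_[p]) • s i) := by
      intro m
      have hmm : m ∈ Submodule.span ℤ_[p] (Set.range s) := hs ▸ Submodule.mem_top
      obtain ⟨c, hc⟩ := (mem_span_range_iff_exists_fun ℤ_[p]).mp hmm
      refine ⟨fun i => PadicInt.toZMod (c i), ?_⟩
      rw [← hc]
      refine Finset.sum_congr rfl fun i _ => ?_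
      have hdvd : (p : ℤ_[p]) ∣ (((PadicInt.toZMod (c i)).val : ℤ_[p]) - c i) := by
        rw [← Ideal.mem_span_singleton, ← PadicInt.maximalIdeal_eq_span_p,
          ← PadicInt.ker_toZMod, RingHom.mem_ker, map_sub, map_natCast, ZMod.natCast_val,
          ZMod.cast_id, sub_self]
      obtain ⟨t, ht⟩ := hdvd
      have hform : ((PadicInt.toZMod (c i)).val : ℤ_[p]) = c i + p * t := by
        rw [← ht]; ring
      rw [hform, add_smul, mul_smul, torsion (t • s i), add_zero]
    have hfin : Finite (B ⧸ (P : Submodule B B)) := Finite.of_surjective _ hsurj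
    exact exists_pow_jacobson_le P hfin
end

section
/- Let A be a semi-simple algebra over a field k and let M be a finitely generated left A-module with an endomorphism θ. Then θ is semi-simple at 0 (i.e. M admits a θ-equivariant direct sum decomposition M = V ⊕ W with θ|_V = 0 and θ|_W an automorphism of W) if and only if the canonical map ker(θ) → M → coker(θ) (inclusion followed by projection) is an isomorphism. -/
private lemma aux_bij_iff_isCompl {A M : Type*} [Ring A]
    [AddCommGroup M] [Module A M] (θ : M →ₗ[A] M) :
    Function.Bijective ⇑((LinearMap.range θ).mkQ ∘ₗ (LinearMap.ker θ).subtype) ↔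
      IsCompl (LinearMap.ker θ) (LinearMap.range θ) := by
  constructor
  · rintro ⟨hinj, hsurj⟩
    constructor
    · rw [disjoint_iff_inf_le]
      rintro x ⟨hxk, hxr⟩
      have h0 : ((LinearMap.range θ).mkQ ∘ₗ (LinearMap.ker θ).subtype) ⟨x, hxk⟩ =
          ((LinearMap.range θ).mkQ ∘ₗ (LinearMap.ker θ).subtype) 0 := by
        simp only [map_zero]
        simpa [Submodule.Quotient.mk_eq_zero] using hxr
      have := hinj h0
      simpa using congrArg Subtype.val this
    · rw [codisjoint_iff_le_sup]
      intro m _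
      obtain ⟨⟨x, hx⟩, hxm⟩ := hsurj (Submodule.Quotient.mk m)
      have : m - x ∈ LinearMap.range θ := by
        rw [← Submodule.Quotient.mk_eq_zero, Submodule.Quotient.mk_sub]
        simp only [LinearMap.comp_apply, Submodule.coe_subtype, Submodule.mkQ_apply] at hxm
        rw [hxm]; simp
      have : m = x + (m - x) := by abel
      rw [this]
      exact Submodule.add_mem_sup hx ‹m - x ∈ _›
  · rintro ⟨hdis, hcod⟩
    constructor
    · rintro ⟨x, hx⟩ ⟨y, hy⟩ hxy
      simp only [LinearMap.comp_apply, Submodule.coe_subtype, Submodule.mkQ_apply,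
        Submodule.Quotient.eq] at hxy
      have : x - y ∈ LinearMap.ker θ ⊓ LinearMap.range θ :=
        ⟨sub_mem hx hy, hxy⟩
      rw [hdis.eq_bot] at this
      exact Subtype.ext (sub_eq_zero.mp this)
    · rintro q
      obtain ⟨m, rfl⟩ := Submodule.Quotient.mk_surjective _ q
      obtain ⟨v, w, hv, hw, rfl⟩ := Submodule.codisjoint_iff_exists_add_eq.mp hcod m
      refine ⟨⟨v, hv⟩, ?_⟩
      simp only [LinearMap.comp_apply, Submodule.coe_subtype, Submodule.mkQ_apply,
        Submodule.Quotient.eq]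
      simpa using neg_mem hw

/-- Let `A` be a semi-simple algebra over a field `k` and `M` a finitely
generated left `A`-module with endomorphism `θ`. Then `θ` is semi-simple at `0`
(i.e. `M = V ⊕ W` θ-equivariantly with `θ|_V = 0` and `θ|_W` an automorphism of `W`)
iff the canonical map `ker(θ) → M → coker(θ)` is an isomorphism. -/
theorem semisimple_at_zero_iff_ker_to_coker_bijective
    {k A M : Type*} [Field k] [Ring A] [Algebra k A] [IsSemisimpleRing A]
    [AddCommGroup M] [Module A M] [Module.Finite A M] (θ : M →ₗ[A] M) :
    (∃ V W : Submodule A M, IsCompl V W ∧ (∀ v ∈ V, θ v = 0) ∧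
        Set.BijOn θ (W : Set M) (W : Set M)) ↔
      Function.Bijective ⇑((LinearMap.range θ).mkQ ∘ₗ (LinearMap.ker θ).subtype) := by
  rw [aux_bij_iff_isCompl]
  constructor
  · rintro ⟨V, W, hVW, hV0, hbij⟩
    have hker : LinearMap.ker θ = V := by
      apply le_antisymm
      · intro x hx
        obtain ⟨v, w, hv, hw, rfl⟩ := Submodule.codisjoint_iff_exists_add_eq.mp hVW.codisjoint x
        have hθw : θ w = 0 := by
          have := LinearMap.mem_ker.mp hx
          rw [map_add, hV0 v hv, zero_add] at this
          exact this
        have hw0 : w = 0 := by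
          have h0W : (0 : M) ∈ (W : Set M) := W.zero_mem
          have := hbij.injOn hw h0W (by simp [hθw])
          exact this
        simpa [hw0] using hv
      · intro v hv
        exact LinearMap.mem_ker.mpr (hV0 v hv)
    have hrange : LinearMap.range θ = W := by
      apply le_antisymm
      · rintro _ ⟨x, rfl⟩
        obtain ⟨v, w, hv, hw, rfl⟩ := Submodule.codisjoint_iff_exists_add_eq.mp hVW.codisjoint x
        rw [map_add, hV0 v hv, zero_add]
        exact hbij.mapsTo hw
      · intro w hw
        obtain ⟨w', hw', rfl⟩ := hbij.surjOn hw
        exact ⟨w', rfl⟩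
    rw [hker, hrange]; exact hVW
  · intro h
    refine ⟨LinearMap.ker θ, LinearMap.range θ, h, fun v hv => hv, ?_, ?_, ?_⟩
    · rintro x ⟨y, rfl⟩
      exact ⟨θ y, rfl⟩
    · rintro x hx y hy hxy
      have : x - y ∈ LinearMap.ker θ ⊓ LinearMap.range θ :=
        ⟨by simp [LinearMap.mem_ker, map_sub, hxy], sub_mem hx hy⟩
      rw [h.disjoint.eq_bot] at this
      exact sub_eq_zero.mp this
    · rintro _ ⟨x, rfl⟩
      obtain ⟨v, w, hv, hw, rfl⟩ := Submodule.codisjoint_iff_exists_add_eq.mp h.codisjoint x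
      exact ⟨w, hw, by rw [map_add, LinearMap.mem_ker.mp hv, zero_add]⟩
end

section
/- Let F be a field and let η ∈ F[[T]] be a power series. Let L/F be a field extension and suppose that η, viewed in L[[T]], is the power series expansion of a rational function in L(T) (with denominator not vanishing at 0). Then η is the expansion of a rational function in F(T). -/
open Polynomial PowerSeries

/-- Coefficient of a product of (the coercion of) a polynomial of degree ≤ d with a power
series, as a finite sum over `Fin (d+1)`, valid for coefficients of index ≥ d. -/
lemma coeff_mul_coe_aux {R : Type*} [CommRing R] (q : Polynomial R) (φ : PowerSeries R)
    (d m : ℕ) (hd : q.natDegree ≤ d) (hm : d ≤ m) :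
    PowerSeries.coeff (R := R) m ((q : PowerSeries R) * φ) =
      ∑ i : Fin (d + 1), q.coeff i * PowerSeries.coeff (R := R) (m - i) φ := by
  rw [PowerSeries.coeff_mul, Finset.Nat.sum_antidiagonal_eq_sum_range_succ_mk,
    Fin.sum_univ_eq_sum_range (fun i => q.coeff i * PowerSeries.coeff (R := R) (m - i) φ) (d + 1)]
  simp only [Polynomial.coeff_coe]
  symm
  apply Finset.sum_subset
  · exact Finset.range_subset_range.2 (by omega)
  · intro i hi hni
    have h1 : i < m + 1 := Finset.mem_range.1 hi
    have h2 : d + 1 ≤ i := by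
      by_contra hcon
      exact hni (Finset.mem_range.2 (by omega))
    rw [Polynomial.coeff_eq_zero_of_natDegree_lt (by omega), zero_mul]

/-- Let `F` be a field and `η ∈ F[[T]]` a power series. Let `L/F` be a
field extension and suppose that `η`, viewed in `L[[T]]`, is the power series expansion
of a rational function of `L(T)` (with denominator not vanishing at `0`). Then `η` is
the expansion of a rational function in `F(T)`. -/
theorem rational_descends_of_rational_over_extension
    {F L : Type*} [Field F] [Field L] [Algebra F L] (η : PowerSeries F)
    (h : ∃ P Q : Polynomial L, Q.coeff 0 ≠ 0 ∧
      (Q : PowerSeries L) * PowerSeries.map (algebraMap F L) η = (P : PowerSeries L)) :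
    ∃ p q : Polynomial F, q.coeff 0 ≠ 0 ∧
      (q : PowerSeries F) * η = (p : PowerSeries F) := by
  obtain ⟨P, Q, hQ0, hPQ⟩ := h
  set d := Q.natDegree with hd
  set N := max P.natDegree d with hN
  set a : ℕ → F := fun m => PowerSeries.coeff (R := F) m η with ha
  set f : ℕ → ((Fin (d + 1) → F) →ₗ[F] F) :=
    fun n => ∑ i : Fin (d + 1), a (n + N + 1 - i) • LinearMap.proj i with hf
  have hfapp : ∀ n (x : Fin (d + 1) → F),
      f n x = ∑ i : Fin (d + 1), a (n + N + 1 - i) * x i := by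
    intro n x
    simp [hf]
  by_cases hx : ∃ x : Fin (d + 1) → F, (∀ n, f n x = 0) ∧ x 0 ≠ 0
  · obtain ⟨x, hx1, hx2⟩ := hx
    set q : Polynomial F := ∑ i : Fin (d + 1), Polynomial.monomial (i : ℕ) (x i) with hq
    have hqdeg : q.natDegree ≤ d := by
      apply Polynomial.natDegree_sum_le_of_forall_le
      intro i _
      exact (Polynomial.natDegree_monomial_le _).trans (by omega)
    have hqc : ∀ i : Fin (d + 1), q.coeff i = x i := by
      intro i
      rw [hq, Polynomial.finset_sum_coeff, Finset.sum_eq_single i]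
      · simp
      · intro j _ hj
        rw [Polynomial.coeff_monomial, if_neg (fun hji => hj (Fin.ext hji))]
      · simp
    have hvanish : ∀ m, N < m → PowerSeries.coeff (R := F) m ((q : PowerSeries F) * η) = 0 := by
      intro m hm
      rw [coeff_mul_coe_aux q η d m hqdeg (by omega)]
      have h1 := hx1 (m - N - 1)
      rw [hfapp] at h1
      have hmeq : m - N - 1 + N + 1 = m := by omega
      rw [hmeq] at h1
      calc ∑ i : Fin (d + 1), q.coeff i * PowerSeries.coeff (R := F) (m - i) η
          = ∑ i : Fin (d + 1), a (m - i) * x i := by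
            apply Finset.sum_congr rfl
            intro i _
            rw [hqc, mul_comm]
        _ = 0 := h1
    refine ⟨PowerSeries.trunc (N + 1) ((q : PowerSeries F) * η), q, ?_, ?_⟩
    · have h0 : q.coeff ((0 : Fin (d + 1)) : ℕ) = x 0 := hqc 0
      simpa using h0 ▸ (by simpa using hx2)
    · ext m
      rw [Polynomial.coeff_coe, PowerSeries.coeff_trunc]
      split
      · rfl
      · exact hvanish m (by omega)
  · push_neg at hx
    exfalso
    have hker : ⨅ n, LinearMap.ker (f n) ≤
        LinearMap.ker (LinearMap.proj (R := F) (φ := fun _ : Fin (d + 1) => F) 0) := by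
      intro x hxk
      simp only [Submodule.mem_iInf, LinearMap.mem_ker] at hxk ⊢
      exact hx x hxk
    have hspan := FiniteDimensional.mem_span_of_iInf_ker_le_ker hker
    obtain ⟨c, hc⟩ := Finsupp.mem_span_range_iff_exists_finsupp.1 hspan
    -- scalar identities over F
    have hscal : ∀ i : Fin (d + 1),
        (c.sum fun n r => r * a (n + N + 1 - i)) = if (i : Fin (d + 1)) = 0 then 1 else 0 := by
      intro i
      have h1 := LinearMap.congr_fun hc (Pi.single i 1)
      simp only [Finsupp.sum, LinearMap.coe_sum, Finset.sum_apply, LinearMap.smul_apply,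
        smul_eq_mul, LinearMap.proj_apply] at h1
      have h2 : ∀ n, f n (Pi.single i (1 : F)) = a (n + N + 1 - i) := by
        intro n
        rw [hfapp]
        simp [Pi.single_apply]
      rw [Finsupp.sum]
      have h3 : ∑ n ∈ c.support, c n * a (n + N + 1 - (i : ℕ)) = (Pi.single i 1 : Fin (d + 1) → F) 0 := by
        rw [← h1]
        exact Finset.sum_congr rfl fun n _ => by rw [h2]
      rw [h3, Pi.single_apply]
      by_cases hi : i = 0 <;> simp [hi, eq_comm]
    -- now transfer to L and contradict hQ0
    have hPcoeff : ∀ n : ℕ,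
        PowerSeries.coeff (R := L) (n + N + 1) ((Q : PowerSeries L) * PowerSeries.map (algebraMap F L) η)
          = 0 := by
      intro n
      rw [hPQ, Polynomial.coeff_coe]
      exact Polynomial.coeff_eq_zero_of_natDegree_lt (by omega)
    have hQcoeff : ∀ n : ℕ,
        PowerSeries.coeff (R := L) (n + N + 1) ((Q : PowerSeries L) * PowerSeries.map (algebraMap F L) η)
          = ∑ i : Fin (d + 1), Q.coeff i * algebraMap F L (a (n + N + 1 - i)) := by
      intro n
      rw [coeff_mul_coe_aux Q _ d (n + N + 1) (le_of_eq hd.symm) (by omega)]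
      apply Finset.sum_congr rfl
      intro i _
      rw [PowerSeries.coeff_map]
    have key : Q.coeff 0 = 0 := by
      have hQ00 : Q.coeff ((0 : Fin (d + 1)) : ℕ) = Q.coeff 0 := by norm_num
      calc Q.coeff 0
          = ∑ i : Fin (d + 1), (if i = 0 then (1 : L) else 0) * Q.coeff i := by
            simp only [ite_mul, one_mul, zero_mul]
            rw [Finset.sum_ite_eq' Finset.univ (0 : Fin (d + 1)) (fun i => Q.coeff (i : ℕ))]
            simp [hQ00]
        _ = ∑ i : Fin (d + 1),
              (algebraMap F L (c.sum fun n r => r * a (n + N + 1 - i))) * Q.coeff i := by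
            apply Finset.sum_congr rfl
            intro i _
            rw [hscal i]
            by_cases hi : i = 0 <;> simp [hi]
        _ = ∑ i : Fin (d + 1), ∑ n ∈ c.support,
              (algebraMap F L (c n) * algebraMap F L (a (n + N + 1 - i))) * Q.coeff i := by
            apply Finset.sum_congr rfl
            intro i _
            rw [Finsupp.sum, map_sum, Finset.sum_mul]
            apply Finset.sum_congr rfl
            intro n _
            rw [map_mul]
        _ = ∑ n ∈ c.support, algebraMap F L (c n) *
              ∑ i : Fin (d + 1), Q.coeff i * algebraMap F L (a (n + N + 1 - i)) := by
            rw [Finset.sum_comm]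
            apply Finset.sum_congr rfl
            intro n _
            rw [Finset.mul_sum]
            apply Finset.sum_congr rfl
            intro i _
            ring
        _ = 0 := by
            apply Finset.sum_eq_zero
            intro n _
            rw [← hQcoeff n, hPcoeff n, mul_zero]
    exact hQ0 key
end
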